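/- Let H be a real Hilbert space and let D : H → H' be a bounded linear operator into the dual such that ⟨Dφ, φ⟩ ≥ 0 for all φ ∈ H. Suppose there is a compact linear operator C : H → H' with ⟨(D + C)φ, φ⟩ ≥ c‖φ‖² for some c > 0 and all φ ∈ H, and suppose additionally that ⟨Dφ, φ⟩ = 0 implies φ = 0. Then there exists a constant c' > 0 such that ⟨Dφ, φ⟩ ≥ c'‖φ‖² for all φ ∈ H. -/

import Mathlib

open Filter Topology Metric NormedSpace InnerProductSpace

/-- A nonnegative operator satisfying a Gårding inequality (coercive modulo a
compact perturbation) that is strictly positive definite is coercive. -/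
theorem stmt_2 {H : Type*} [NormedAddCommGroup H] [InnerProductSpace ℝ H]
    [CompleteSpace H]
    (D C : H →L[ℝ] StrongDual ℝ H) (hC : IsCompactOperator C)
    (c : ℝ) (hc : 0 < c)
    (hpos : ∀ φ : H, 0 ≤ D φ φ)
    (hGarding : ∀ φ : H, c * ‖φ‖ ^ 2 ≤ (D + C) φ φ)
    (hdef : ∀ φ : H, D φ φ = 0 → φ = 0) :
    ∃ c' > 0, ∀ φ : H, c' * ‖φ‖ ^ 2 ≤ D φ φ := by
  by_contra hcon
  push_neg at hcon
  -- Build unit vectors `u n` with `D (u n) (u n) < (n+1)⁻¹`.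
  have key : ∀ n : ℕ, ∃ u : H, ‖u‖ = 1 ∧ D u u < ((n : ℝ) + 1)⁻¹ := by
    intro n
    obtain ⟨φ, hφ⟩ := hcon ((n : ℝ) + 1)⁻¹ (by positivity)
    have hφ0 : φ ≠ 0 := by
      rintro rfl
      simp at hφ
    have hn : ‖φ‖ ≠ 0 := norm_ne_zero_iff.mpr hφ0
    have hnpos : (0 : ℝ) < ‖φ‖ := norm_pos_iff.mpr hφ0
    refine ⟨‖φ‖⁻¹ • φ, ?_, ?_⟩
    · rw [norm_smul]
      simp [abs_of_nonneg (inv_nonneg.mpr (norm_nonneg φ)), inv_mul_cancel₀ hn]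
    · have h1 : D (‖φ‖⁻¹ • φ) (‖φ‖⁻¹ • φ) = ‖φ‖⁻¹ * (‖φ‖⁻¹ * D φ φ) := by
        simp [map_smul]
      rw [h1]
      have h2 : D φ φ < ((n : ℝ) + 1)⁻¹ * ‖φ‖ ^ 2 := hφ
      have h3 : (0 : ℝ) < ‖φ‖ ^ 2 := by positivity
      rw [inv_mul_lt_iff₀ hnpos, inv_mul_lt_iff₀ hnpos]
      nlinarith
  choose u hu1 hu2 using key
  -- `D (u n) (u n) → 0`.
  have hQ0 : Tendsto (fun n : ℕ => D (u n) (u n)) atTop (𝓝 0) := by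
    have hb : Tendsto (fun n : ℕ => ((n : ℝ) + 1)⁻¹) atTop (𝓝 0) := by
      simpa [one_div] using tendsto_one_div_add_atTop_nhds_zero_nat (𝕜 := ℝ)
    exact squeeze_zero (fun n => hpos (u n)) (fun n => (hu2 n).le) hb
  -- An ultrafilter refining `atTop`.
  let U : Ultrafilter ℕ := Ultrafilter.of atTop
  have hU : (U : Filter ℕ) ≤ atTop := Ultrafilter.of_le _
  -- Strong limit of `C (u n)` along `U`, by compactness.
  obtain ⟨K₂, hK₂c, hK₂⟩ :=
    hC.image_closedBall_subset_compact (f := (C : H →ₗ[ℝ] StrongDual ℝ H)) 1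
  have hmem₂ : ∀ n, C (u n) ∈ K₂ := fun n =>
    hK₂ ⟨u n, by simp [mem_closedBall_zero_iff, hu1 n], rfl⟩
  obtain ⟨ψ, -, hψ⟩ := hK₂c.ultrafilter_le_nhds (U.map fun n => C (u n))
    (by
      rw [Ultrafilter.coe_map, le_principal_iff]
      exact Filter.mem_map.mpr (Filter.univ_mem' hmem₂))
  have hCψ : Tendsto (fun n => C (u n)) (U : Filter ℕ) (𝓝 ψ) := by
    exact hψ
  -- Weak limit of `u n` along `U`, by Banach–Alaoglu + Riesz.
  set w : ℕ → WeakDual ℝ H := fun n => StrongDual.toWeakDual (toDual ℝ H (u n)) with hwdef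
  have hw : ∀ n, w n ∈ WeakDual.toStrongDual ⁻¹' closedBall (0 : StrongDual ℝ H) 1 := by
    intro n
    simp only [Set.mem_preimage, mem_closedBall_zero_iff, hwdef]
    rw [show (WeakDual.toStrongDual (StrongDual.toWeakDual (toDual ℝ H (u n))) : StrongDual ℝ H)
      = toDual ℝ H (u n) from rfl]
    rw [(toDual ℝ H).norm_map, hu1 n]
  obtain ⟨x', -, hx'⟩ :=
    (WeakDual.isCompact_closedBall (𝕜 := ℝ) (E := H) 0 1).ultrafilter_le_nhds (U.map w)
    (by
      rw [Ultrafilter.coe_map, le_principal_iff]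
      exact Filter.mem_map.mpr (Filter.univ_mem' hw))
  have hweakx' : Tendsto w (U : Filter ℕ) (𝓝 x') := by
    exact hx'
  have heval := tendsto_iff_forall_eval_tendsto_topDualPairing.mp hweakx'
  set x : H := (toDual ℝ H).symm (WeakDual.toStrongDual x') with hxdef
  -- All continuous functionals converge along `U`.
  have hweak : ∀ f : StrongDual ℝ H,
      Tendsto (fun n => f (u n)) (U : Filter ℕ) (𝓝 (f x)) := by
    intro f
    set z : H := (toDual ℝ H).symm f with hz
    have hf : ∀ v : H, f v = inner ℝ z v := by
      intro v
      rw [← (toDual ℝ H).apply_symm_apply f, toDual_apply_apply]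
    have h := heval z
    have h1 : (fun n => (topDualPairing ℝ H) (w n) z) = fun n => f (u n) := by
      funext n
      rw [show (topDualPairing ℝ H) (w n) z = ((w n : WeakDual ℝ H) z : ℝ) from rfl, hf (u n)]
      rw [show ((w n : WeakDual ℝ H) z : ℝ) = toDual ℝ H (u n) z from rfl, toDual_apply_apply,
        real_inner_comm]
    have h2 : (topDualPairing ℝ H) x' z = f x := by
      rw [show (topDualPairing ℝ H) x' z = ((x' : WeakDual ℝ H) z : ℝ) from rfl, hf x]
      rw [show ((x' : WeakDual ℝ H) z : ℝ) = WeakDual.toStrongDual x' z from rfl]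
      rw [show (WeakDual.toStrongDual x' : StrongDual ℝ H) = toDual ℝ H x from
        ((toDual ℝ H).apply_symm_apply _).symm, toDual_apply_apply, real_inner_comm]
    rw [← h1, ← h2]
    exact h
  -- `D x x ≤ 0`, hence `x = 0`.
  have hQU : Tendsto (fun n => D (u n) (u n)) (U : Filter ℕ) (𝓝 0) := hQ0.mono_left hU
  have hDxu : Tendsto (fun n => D x (u n)) (U : Filter ℕ) (𝓝 (D x x)) := hweak (D x)
  have hDux : Tendsto (fun n => D (u n) x) (U : Filter ℕ) (𝓝 (D x x)) := by
    have := hweak (D.flip x)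
    simpa [ContinuousLinearMap.flip_apply] using this
  have hx0 : x = 0 := by
    apply hdef
    have hexp : ∀ n, 0 ≤ D (u n) (u n) - D (u n) x - D x (u n) + D x x := by
      intro n
      have h := hpos (u n - x)
      simp only [map_sub, ContinuousLinearMap.sub_apply] at h
      linarith
    have hlim : Tendsto (fun n => D (u n) (u n) - D (u n) x - D x (u n) + D x x)
        (U : Filter ℕ) (𝓝 (0 - D x x - D x x + D x x)) :=
      ((hQU.sub hDux).sub hDxu).add tendsto_const_nhds
    have h0 : (0 : ℝ) ≤ 0 - D x x - D x x + D x x := ge_of_tendsto' hlim hexp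
    have := hpos x
    linarith
  -- Gårding inequality in the limit gives `c ≤ 0`, contradiction.
  have hrem : Tendsto (fun n => (C (u n) - ψ) (u n)) (U : Filter ℕ) (𝓝 0) := by
    refine squeeze_zero_norm (fun n => ?_) (tendsto_iff_norm_sub_tendsto_zero.mp hCψ)
    calc ‖(C (u n) - ψ) (u n)‖ ≤ ‖C (u n) - ψ‖ * ‖u n‖ :=
          (C (u n) - ψ).le_opNorm (u n)
      _ = ‖C (u n) - ψ‖ := by rw [hu1 n, mul_one]
  have hψu : Tendsto (fun n => ψ (u n)) (U : Filter ℕ) (𝓝 0) := by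
    have := hweak ψ
    rwa [hx0, map_zero] at this
  have hsum : Tendsto (fun n => D (u n) (u n) + ((C (u n) - ψ) (u n) + ψ (u n)))
      (U : Filter ℕ) (𝓝 (0 + (0 + 0))) := hQU.add (hrem.add hψu)
  have hle : ∀ n, c ≤ D (u n) (u n) + ((C (u n) - ψ) (u n) + ψ (u n)) := by
    intro n
    have h := hGarding (u n)
    rw [hu1 n] at h
    simp only [ContinuousLinearMap.add_apply, ContinuousLinearMap.sub_apply] at h ⊢
    linarith
  have : c ≤ 0 + (0 + 0) := ge_of_tendsto' hsum hle
  linarith
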